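/- Let n ≥ 1, β > 0, δ > 0, and let A : [0,∞) → ℝ^{n×n} be a piecewise-constant function (a switching signal among finitely many matrices) such that A(t) is entrywise nonnegative for every t ≥ 0. Suppose p, q : [0,∞) → ℝⁿ are differentiable, p(t) is entrywise nonnegative for every t ≥ 0, p(0) = q(0), and for all t ≥ 0: p'(t) = (βA(t) − δI)p(t) − β·diag(p(t))·A(t)·p(t) and q'(t) = (βA(t) − δI)q(t). Then for every t ≥ 0, p(t) ≤ q(t) entrywise, and in particular ‖p(t)‖₁ ≤ ‖q(t)‖₁, where ‖x‖₁ = Σ_{i=1}^n |x_i|. -/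

import Mathlib

open Matrix Filter

lemma hasDerivAt_posPartSq (x : ℝ) :
    HasDerivAt (fun y : ℝ => max y 0 ^ 2) (2 * max x 0) x := by
  rcases lt_trichotomy x 0 with hx | hx | hx
  · have hmax : max x 0 = 0 := max_eq_right hx.le
    rw [hmax, mul_zero]
    have : (fun y : ℝ => max y 0 ^ 2) =ᶠ[nhds x] fun _ => (0 : ℝ) := by
      filter_upwards [eventually_lt_nhds hx] with y hy
      simp [max_eq_right hy.le]
    exact (hasDerivAt_const x (0:ℝ)).congr_of_eventuallyEq this
  · subst hx
    rw [max_self, mul_zero]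
    rw [hasDerivAt_iff_isLittleO]
    rw [Asymptotics.isLittleO_iff]
    intro c hc
    filter_upwards [Metric.ball_mem_nhds 0 hc] with y hy
    have hy' : |y| < c := by simpa [Real.dist_eq] using hy
    have h1 : |max y 0 ^ 2| ≤ |y| * |y| := by
      rcases le_or_gt y 0 with h | h
      · rw [max_eq_right h]
        simpa using mul_nonneg (abs_nonneg y) (abs_nonneg y)
      · rw [max_eq_left h.le, abs_of_nonneg (sq_nonneg y), sq, abs_of_pos h]
    simp only [sub_zero, smul_eq_mul, mul_zero, Real.norm_eq_abs]
    calc |max y 0 ^ 2 - max (0:ℝ) 0 ^ 2| = |max y 0 ^ 2| := by simp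
      _ ≤ |y| * |y| := h1
      _ ≤ c * |y| := by nlinarith [abs_nonneg y]
  · have hmax : max x 0 = x := max_eq_left hx.le
    rw [hmax]
    have : (fun y : ℝ => max y 0 ^ 2) =ᶠ[nhds x] fun y => y ^ 2 := by
      filter_upwards [eventually_gt_nhds hx] with y hy
      simp [max_eq_left hy.le]
    have h2 : HasDerivAt (fun y : ℝ => y ^ 2) (2 * x) x := by
      simpa using hasDerivAt_pow 2 x
    exact h2.congr_of_eventuallyEq this

/-- For the switched N-intertwined model `p' = (βA(t) - δI)p - β diag(p) A(t) p`
and its linearization `q' = (βA(t) - δI)q` with the same initial condition, the solution of the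
nonlinear model stays entrywise below that of the linearization; in particular
`‖p(t)‖₁ ≤ ‖q(t)‖₁`. -/
theorem stmt5 {n : ℕ} (hn : 1 ≤ n) (β δ : ℝ) (hβ : 0 < β) (hδ : 0 < δ)
    (A : ℝ → Matrix (Fin n) (Fin n) ℝ)
    (hAfin : (Set.range A).Finite)
    (hApc : ∀ t : ℝ, 0 ≤ t → ∃ ε > (0 : ℝ), ∀ u ∈ Set.Ico t (t + ε), A u = A t)
    (hAnn : ∀ t : ℝ, 0 ≤ t → ∀ i j, 0 ≤ A t i j)
    (p q : ℝ → Fin n → ℝ)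
    (hp0 : p 0 = q 0)
    (hpnn : ∀ t : ℝ, 0 ≤ t → ∀ i, 0 ≤ p t i)
    (hp : ∀ t : ℝ, 0 ≤ t → HasDerivAt p
      ((β • A t - δ • (1 : Matrix (Fin n) (Fin n) ℝ)).mulVec (p t)
        - β • (Matrix.diagonal (p t) * A t).mulVec (p t)) t)
    (hq : ∀ t : ℝ, 0 ≤ t → HasDerivAt q
      ((β • A t - δ • (1 : Matrix (Fin n) (Fin n) ℝ)).mulVec (q t)) t) :
    ∀ t : ℝ, 0 ≤ t → (∀ i, p t i ≤ q t i) ∧ (∑ i, |p t i|) ≤ ∑ i, |q t i| := by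
  classical
  have i0 : Fin n := ⟨0, hn⟩
  -- uniform bound on entries of A
  have hA0 : A 0 ∈ hAfin.toFinset := by
    rw [Set.Finite.mem_toFinset]; exact ⟨0, rfl⟩
  have hsne : hAfin.toFinset.Nonempty := ⟨A 0, hA0⟩
  set C0 : ℝ := hAfin.toFinset.sup' hsne (fun B => ∑ i, ∑ j, |B i j|) with hC0def
  have hC0 : ∀ t : ℝ, ∀ i j, |A t i j| ≤ C0 := by
    intro t i j
    have hmem : A t ∈ hAfin.toFinset := by
      rw [Set.Finite.mem_toFinset]; exact ⟨t, rfl⟩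
    have h1 : |A t i j| ≤ ∑ i', ∑ j', |A t i' j'| :=
      calc |A t i j| ≤ ∑ j', |A t i j'| :=
            Finset.single_le_sum (f := fun j' => |A t i j'|) (fun j' _ => abs_nonneg _) (Finset.mem_univ j)
        _ ≤ ∑ i', ∑ j', |A t i' j'| :=
            Finset.single_le_sum (f := fun i' => ∑ j', |A t i' j'|)
              (fun i' _ => Finset.sum_nonneg fun _ _ => abs_nonneg _) (Finset.mem_univ i)
    exact h1.trans (Finset.le_sup' (fun B : Matrix (Fin n) (Fin n) ℝ => ∑ i', ∑ j', |B i' j'|) hmem)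
  have hC0nn : (0:ℝ) ≤ C0 := le_trans (abs_nonneg _) (hC0 0 i0 i0)
  set C : ℝ := β * C0 + δ with hCdef
  have hCpos : 0 < C := by positivity
  -- bound on entries of M t = β A t - δ I
  have hMabs : ∀ (t : ℝ) (i j : Fin n),
      |(β • A t - δ • (1 : Matrix (Fin n) (Fin n) ℝ)) i j| ≤ C := by
    intro t i j
    have he : |(if i = j then (1:ℝ) else 0)| ≤ 1 := by split_ifs <;> simp
    have : (β • A t - δ • (1 : Matrix (Fin n) (Fin n) ℝ)) i j
        = β * A t i j - δ * (if i = j then 1 else 0) := by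
      simp [Matrix.sub_apply, Matrix.one_apply]
    rw [this]
    calc |β * A t i j - δ * (if i = j then (1:ℝ) else 0)|
        ≤ |β * A t i j| + |δ * (if i = j then (1:ℝ) else 0)| := abs_sub _ _
      _ ≤ β * C0 + δ := by
          gcongr
          · rw [abs_mul, abs_of_pos hβ]
            exact mul_le_mul_of_nonneg_left (hC0 t i j) hβ.le
          · rw [abs_mul, abs_of_pos hδ]
            calc δ * |(if i = j then (1:ℝ) else 0)| ≤ δ * 1 :=
                  mul_le_mul_of_nonneg_left he hδ.le
              _ = δ := mul_one δ
  set K : ℝ := 2 * C * n with hKdef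
  -- the comparison function
  set f : ℝ → ℝ := fun t => ∑ i, max (p t i - q t i) 0 ^ 2 with hfdef
  set F : ℝ → ℝ := fun t => ∑ i, 2 * max (p t i - q t i) 0 *
      (((β • A t - δ • (1 : Matrix (Fin n) (Fin n) ℝ)).mulVec (p t)
        - β • (Matrix.diagonal (p t) * A t).mulVec (p t)) i
       - ((β • A t - δ • (1 : Matrix (Fin n) (Fin n) ℝ)).mulVec (q t)) i) with hFdef
  have hdf : ∀ t : ℝ, 0 ≤ t → HasDerivAt f (F t) t := by
    intro t ht
    apply HasDerivAt.fun_sum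
    intro i _
    have hwi : HasDerivAt (fun u => p u i - q u i)
        ((((β • A t - δ • (1 : Matrix (Fin n) (Fin n) ℝ)).mulVec (p t)
          - β • (Matrix.diagonal (p t) * A t).mulVec (p t)) i
         - ((β • A t - δ • (1 : Matrix (Fin n) (Fin n) ℝ)).mulVec (q t)) i)) t :=
      ((hasDerivAt_pi.1 (hp t ht)) i).sub ((hasDerivAt_pi.1 (hq t ht)) i)
    have := (hasDerivAt_posPartSq (p t i - q t i)).comp t hwi
    simpa [Function.comp_def, mul_assoc] using this
  -- the key differential inequality
  have hbound : ∀ t : ℝ, 0 ≤ t → F t ≤ K * f t := by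
    intro t ht
    set a : Fin n → ℝ := fun i => max (p t i - q t i) 0 with hadef
    have hann : ∀ i, 0 ≤ a i := fun i => le_max_right _ _
    have hterm : ∀ i, 2 * a i *
        (((β • A t - δ • (1 : Matrix (Fin n) (Fin n) ℝ)).mulVec (p t)
          - β • (Matrix.diagonal (p t) * A t).mulVec (p t)) i
         - ((β • A t - δ • (1 : Matrix (Fin n) (Fin n) ℝ)).mulVec (q t)) i)
        ≤ ∑ j, 2 * C * (a i * a j) := by
      intro i
      set M : Matrix (Fin n) (Fin n) ℝ := β • A t - δ • (1 : Matrix (Fin n) (Fin n) ℝ) with hMdef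
      have hexp : ((M.mulVec (p t) - β • (Matrix.diagonal (p t) * A t).mulVec (p t)) i
         - (M.mulVec (q t)) i)
          = (∑ j, M i j * (p t j - q t j)) - β * ∑ j, p t i * A t i j * p t j := by
        simp [Matrix.mulVec, dotProduct, Matrix.diagonal_mul, Pi.sub_apply,
          mul_sub, Finset.sum_sub_distrib]
        ring
      rw [hexp]
      have hg : 0 ≤ ∑ j, p t i * A t i j * p t j :=
        Finset.sum_nonneg fun j _ =>
          mul_nonneg (mul_nonneg (hpnn t ht i) (hAnn t ht i j)) (hpnn t ht j)
      have h1 : a i * ((∑ j, M i j * (p t j - q t j)) - β * ∑ j, p t i * A t i j * p t j)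
          ≤ ∑ j, C * (a i * a j) := by
        have h2 : a i * (∑ j, M i j * (p t j - q t j)) ≤ ∑ j, C * (a i * a j) := by
          rw [Finset.mul_sum]
          apply Finset.sum_le_sum
          intro j _
          rcases eq_or_ne i j with rfl | hij
          · have haw : a i * (p t i - q t i) = a i * a i := by
              rcases le_or_gt (p t i - q t i) 0 with h | h
              · simp [hadef, max_eq_right h]
              · simp [hadef, max_eq_left h.le]
            have : a i * (M i i * (p t i - q t i)) = M i i * (a i * a i) := by
              rw [← haw]; ring
            rw [this]
            exact mul_le_mul_of_nonneg_right ((le_abs_self _).trans (hMabs t i i))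
              (mul_nonneg (hann i) (hann i))
          · have hMij : 0 ≤ M i j := by
              have : M i j = β * A t i j := by
                simp [hMdef, Matrix.sub_apply, Matrix.one_apply, hij]
              rw [this]; exact mul_nonneg hβ.le (hAnn t ht i j)
            have hMC : M i j ≤ C := (le_abs_self _).trans (hMabs t i j)
            have hwj : p t j - q t j ≤ a j := le_max_left _ _
            have h3 : M i j * (p t j - q t j) ≤ M i j * a j :=
              mul_le_mul_of_nonneg_left hwj hMij
            have h4 : M i j * a j ≤ C * a j :=
              mul_le_mul_of_nonneg_right hMC (hann j)
            calc a i * (M i j * (p t j - q t j)) ≤ a i * (C * a j) :=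
                  mul_le_mul_of_nonneg_left (h3.trans h4) (hann i)
              _ = C * (a i * a j) := by ring
        have h5 : 0 ≤ a i * (β * ∑ j, p t i * A t i j * p t j) :=
          mul_nonneg (hann i) (mul_nonneg hβ.le hg)
        nlinarith [h2, h5]
      calc 2 * a i * ((∑ j, M i j * (p t j - q t j)) - β * ∑ j, p t i * A t i j * p t j)
          = 2 * (a i * ((∑ j, M i j * (p t j - q t j)) - β * ∑ j, p t i * A t i j * p t j)) := by
            ring
        _ ≤ 2 * ∑ j, C * (a i * a j) := by linarith [h1]
        _ = ∑ j, 2 * C * (a i * a j) := by rw [Finset.mul_sum]; congr 1; funext j; ring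
    have hsum : F t ≤ ∑ i, ∑ j, 2 * C * (a i * a j) :=
      Finset.sum_le_sum fun i _ => hterm i
    have heq : ∑ i, ∑ j, 2 * C * (a i * a j) = 2 * C * ((∑ i, a i) * (∑ i, a i)) := by
      rw [Finset.sum_mul_sum]
      rw [Finset.mul_sum]
      congr 1; funext i
      rw [Finset.mul_sum]
    have hcs : (∑ i, a i) * (∑ i, a i) ≤ n * ∑ i, a i ^ 2 := by
      have := sq_sum_le_card_mul_sum_sq (s := (Finset.univ : Finset (Fin n))) (f := a)
      simpa [sq] using this
    calc F t ≤ 2 * C * ((∑ i, a i) * (∑ i, a i)) := by rw [← heq]; exact hsum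
      _ ≤ 2 * C * (n * ∑ i, a i ^ 2) := by
          exact mul_le_mul_of_nonneg_left hcs (by positivity)
      _ = K * f t := by rw [hKdef, hfdef]; ring
  -- Gronwall
  have hmain : ∀ T : ℝ, 0 ≤ T → ∀ i, p T i ≤ q T i := by
    intro T hT
    have hG := le_gronwallBound_of_liminf_deriv_right_le (f := f) (f' := F)
      (δ := 0) (K := K) (ε := 0) (a := 0) (b := T)
      (fun x hx => ((hdf x hx.1).continuousAt).continuousWithinAt)
      (fun x hx r hr => ((hdf x hx.1).hasDerivWithinAt).liminf_right_slope_le hr)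
      (by simp [hfdef, hp0])
      (fun x hx => by simpa using hbound x hx.1)
    have hfT : f T ≤ 0 := by
      have := hG T (Set.mem_Icc.2 ⟨hT, le_refl T⟩)
      rwa [sub_zero, gronwallBound_ε0_δ0] at this
    have hfT0 : f T = 0 :=
      le_antisymm hfT (Finset.sum_nonneg fun i _ => sq_nonneg _)
    intro i
    have h0 : max (p T i - q T i) 0 ^ 2 = 0 := by
      have := (Finset.sum_eq_zero_iff_of_nonneg
        (fun j _ => sq_nonneg (max (p T j - q T j) 0))).1 hfT0 i (Finset.mem_univ i)
      exact this
    have : max (p T i - q T i) 0 = 0 := by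
      have := sq_eq_zero_iff.1 h0
      exact this
    have hle : p T i - q T i ≤ 0 := by
      have := le_max_left (p T i - q T i) 0
      linarith [this.trans_eq ‹max (p T i - q T i) 0 = 0›]
    linarith
  intro t ht
  refine ⟨hmain t ht, ?_⟩
  apply Finset.sum_le_sum
  intro i _
  rw [abs_of_nonneg (hpnn t ht i)]
  exact (hmain t ht i).trans (le_abs_self _)
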